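/- arXiv:2112.02055 — 3 statements merged into one kernel-verified Lean document; each statement's English description precedes it below -/
import Mathlib

section
/- Let F ⊂ ℝ₊ × ℝ^d and let H, H' ∈ (0,1) with H < H'. Then max( dim_{Ψ,H}(F), (H'/H)·dim_{Ψ,H}(F) + 1 − H'/H ) ≤ dim_{Ψ,H'}(F). -/
open MeasureTheory ENNReal Set

noncomputable section

/-- The `H`-parabolic rectangle `[a, a+δ] × ∏_{j=1}^d [b_j, b_j + δ^H]`. -/
def parRect (d : ℕ) (H : ℝ) (a : ℝ) (b : Fin d → ℝ) (δ : ℝ) : Set (ℝ × (Fin d → ℝ)) :=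
  Set.Icc a (a + δ) ×ˢ Set.univ.pi fun j => Set.Icc (b j) (b j + δ ^ H)

/-- The `H`-parabolic `β`-dimensional Hausdorff content `Ψ_H^β(F)`:
the infimum of `Σ_j δ_j^β` over all countable covers of `F` by parabolic rectangles. -/
def parContent (d : ℕ) (H β : ℝ) (F : Set (ℝ × (Fin d → ℝ))) : ℝ≥0∞ :=
  ⨅ (r : ℕ → ℝ × (Fin d → ℝ) × ℝ) (_ : ∀ n, 0 < (r n).2.2)
    (_ : F ⊆ ⋃ n, parRect d H (r n).1 (r n).2.1 (r n).2.2),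
    ∑' n, ENNReal.ofReal ((r n).2.2 ^ β)

/-- The `H`-parabolic Hausdorff dimension `dim_{Ψ,H}(F) = inf {β : Ψ_H^β(F) = 0}`. -/
def parDim (d : ℕ) (H : ℝ) (F : Set (ℝ × (Fin d → ℝ))) : ℝ :=
  sInf {β : ℝ | 0 ≤ β ∧ parContent d H β F = 0}

/-! ### Auxiliary lemmas -/

/-- The constant appearing in the covering estimates. -/
def junkC (β' : ℝ) : ℝ≥0∞ := ENNReal.ofReal 2 + (1 - ENNReal.ofReal ((1/2 : ℝ) ^ β'))⁻¹

lemma half_rpow_lt_one {β' : ℝ} (hβ' : 0 < β') :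
    ENNReal.ofReal ((1/2 : ℝ) ^ β') < 1 :=
  ENNReal.ofReal_lt_one.mpr (Real.rpow_lt_one (by norm_num) (by norm_num) hβ')

lemma junkC_ne_top {β' : ℝ} (hβ' : 0 < β') : junkC β' ≠ ⊤ := by
  have h1 : (1 : ℝ≥0∞) - ENNReal.ofReal ((1/2 : ℝ) ^ β') ≠ 0 := by
    rw [ne_eq, tsub_eq_zero_iff_le, not_le]
    exact half_rpow_lt_one hβ'
  rw [junkC]
  exact ENNReal.add_ne_top.mpr ⟨ENNReal.ofReal_ne_top, ENNReal.inv_ne_top.mpr h1⟩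

/-- The content with exponent `0` is at least `1` (any cover is infinite). -/
lemma one_le_parContent_zero (d : ℕ) (H : ℝ) (F : Set (ℝ × (Fin d → ℝ))) :
    (1 : ℝ≥0∞) ≤ parContent d H 0 F := by
  refine le_iInf fun r => le_iInf fun hr => le_iInf fun _ => ?_
  calc (1 : ℝ≥0∞) = ENNReal.ofReal ((r 0).2.2 ^ (0:ℝ)) := by
        rw [Real.rpow_zero, ENNReal.ofReal_one]
    _ ≤ _ := ENNReal.le_tsum 0

/-- A single parabolic rectangle of parameter `H₂` and side `δ` can be covered by
parabolic rectangles of parameter `H₁`, with controlled cost. -/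
lemma cover_block (d : ℕ) (H₁ H₂ β β' : ℝ) (hβ' : 0 < β')
    (a : ℝ) (b : Fin d → ℝ) (δ σ : ℝ) (k : ℕ)
    (hδ : 0 < δ) (hσ : 0 < σ) (hk : 1 ≤ k)
    (hspace : δ ^ H₂ ≤ σ ^ H₁) (htime : δ ≤ k * σ)
    (hsum : (k : ℝ) * σ ^ β' ≤ 2 * δ ^ β) (hone : σ ^ β' ≤ δ ^ β) :
    ∃ r' : ℕ → ℝ × (Fin d → ℝ) × ℝ,
      (∀ m, 0 < (r' m).2.2) ∧
      parRect d H₂ a b δ ⊆ ⋃ m, parRect d H₁ (r' m).1 (r' m).2.1 (r' m).2.2 ∧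
      ∑' m, ENNReal.ofReal ((r' m).2.2 ^ β') ≤ junkC β' * ENNReal.ofReal (δ ^ β) := by
  classical
  refine ⟨fun m => (if m < k then a + m * σ else a, b,
      if m < k then σ else σ * (1/2 : ℝ) ^ m), ?_, ?_, ?_⟩
  · intro m
    by_cases h : m < k <;> simp [h, hσ, mul_pos hσ (by positivity : (0:ℝ) < (1/2:ℝ)^m)]
  · rintro ⟨t, x⟩ ht
    obtain ⟨ht1, ht2⟩ := ht
    simp only [Set.mem_Icc] at ht1
    set m : ℕ := min (⌊(t - a) / σ⌋₊) (k - 1) with hm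
    have hmk : m < k := lt_of_le_of_lt (min_le_right _ _) (by omega)
    have htanonneg : 0 ≤ t - a := by linarith [ht1.1]
    have hfloor_le : ((⌊(t - a) / σ⌋₊ : ℕ) : ℝ) ≤ (t - a) / σ :=
      Nat.floor_le (by positivity)
    have hml : (m : ℝ) * σ ≤ t - a := by
      have h1 : ((m : ℕ) : ℝ) ≤ (t - a) / σ :=
        le_trans (by exact_mod_cast Nat.cast_le.mpr (min_le_left _ _)) hfloor_le
      calc (m : ℝ) * σ ≤ ((t - a) / σ) * σ := by
            exact mul_le_mul_of_nonneg_right h1 hσ.le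
        _ = t - a := div_mul_cancel₀ _ hσ.ne'
    have hmr : t - a ≤ (m : ℝ) * σ + σ := by
      rcases le_or_gt (⌊(t - a) / σ⌋₊) (k - 1) with hc | hc
      · have hmeq : m = ⌊(t - a) / σ⌋₊ := min_eq_left hc
        have := Nat.lt_floor_add_one ((t - a) / σ)
        rw [← hmeq] at this
        have : (t - a) / σ < (m : ℝ) + 1 := this
        have := (div_lt_iff₀ hσ).mp this
        nlinarith
      · have hmeq : m = k - 1 := min_eq_right (le_of_lt hc)
        have hkfl : k ≤ ⌊(t - a) / σ⌋₊ := by omega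
        have hkm : (m : ℝ) + 1 = (k : ℝ) := by
          rw [hmeq]
          have : ((k - 1 : ℕ) : ℝ) = (k : ℝ) - 1 := by
            rw [Nat.cast_sub hk]; simp
          rw [this]; ring
        calc t - a ≤ δ := by linarith [ht1.2]
          _ ≤ (k : ℝ) * σ := htime
          _ = ((m : ℝ) + 1) * σ := by rw [hkm]
          _ = (m : ℝ) * σ + σ := by ring
    refine Set.mem_iUnion.mpr ⟨m, ?_⟩
    have hifa : (if m < k then a + m * σ else a) = a + m * σ := if_pos hmk
    have hifs : (if m < k then σ else σ * (1/2 : ℝ) ^ m) = σ := if_pos hmk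
    refine ⟨?_, ?_⟩
    · simp only [hifa, hifs, Set.mem_Icc]
      constructor <;> [linarith; linarith]
    · simp only [hifs]
      intro j hj
      have hx := ht2 j (Set.mem_univ j)
      simp only [Set.mem_Icc] at hx ⊢
      exact ⟨hx.1, le_trans hx.2 (by linarith [hspace])⟩
  · -- the sum estimate
    set Q : ℝ≥0∞ := ENNReal.ofReal ((1/2 : ℝ) ^ β') with hQ
    have hterm : ∀ m : ℕ,
        ENNReal.ofReal ((if m < k then σ else σ * (1/2 : ℝ) ^ m) ^ β')
          ≤ (if m < k then ENNReal.ofReal (σ ^ β') else 0)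
            + ENNReal.ofReal (σ ^ β') * Q ^ m := by
      intro m
      have hjunk : ENNReal.ofReal ((σ * (1/2 : ℝ) ^ m) ^ β')
          = ENNReal.ofReal (σ ^ β') * Q ^ m := by
        rw [Real.mul_rpow hσ.le (by positivity)]
        rw [ENNReal.ofReal_mul (by positivity)]
        congr 1
        rw [hQ, ← ENNReal.ofReal_pow (by positivity)]
        congr 1
        rw [← Real.rpow_natCast ((1/2 : ℝ)) m, ← Real.rpow_mul (by norm_num),
          mul_comm, Real.rpow_mul (by norm_num), Real.rpow_natCast]
      by_cases h : m < k
      · simp only [h, if_true]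
        exact le_add_of_le_of_nonneg le_rfl zero_le
      · simp only [h, if_false, zero_add, hjunk]
        exact le_rfl
    calc ∑' m, ENNReal.ofReal ((if m < k then σ else σ * (1/2 : ℝ) ^ m) ^ β')
        ≤ ∑' m, ((if m < k then ENNReal.ofReal (σ ^ β') else 0)
            + ENNReal.ofReal (σ ^ β') * Q ^ m) := ENNReal.tsum_le_tsum hterm
      _ = (∑' m, (if m < k then ENNReal.ofReal (σ ^ β') else 0))
            + ∑' m, ENNReal.ofReal (σ ^ β') * Q ^ m := ENNReal.tsum_add
      _ = (k : ℝ≥0∞) * ENNReal.ofReal (σ ^ β')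
            + ENNReal.ofReal (σ ^ β') * (1 - Q)⁻¹ := by
          congr 1
          · rw [tsum_eq_sum (s := Finset.range k) (by intro b hb; simp at hb; simp [Nat.not_lt.mpr hb, hb.not_gt])]
            simp [Finset.sum_ite_of_true, mul_comm]
          · rw [ENNReal.tsum_mul_left, ENNReal.tsum_geometric]
      _ ≤ ENNReal.ofReal 2 * ENNReal.ofReal (δ ^ β)
            + ENNReal.ofReal (δ ^ β) * (1 - Q)⁻¹ := by
          refine add_le_add ?_ (mul_le_mul_left (ENNReal.ofReal_le_ofReal hone) _)
          calc (k : ℝ≥0∞) * ENNReal.ofReal (σ ^ β')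
              = ENNReal.ofReal ((k : ℝ) * σ ^ β') := by
                rw [ENNReal.ofReal_mul (by positivity), ENNReal.ofReal_natCast]
            _ ≤ ENNReal.ofReal (2 * δ ^ β) := ENNReal.ofReal_le_ofReal hsum
            _ = ENNReal.ofReal 2 * ENNReal.ofReal (δ ^ β) :=
                ENNReal.ofReal_mul (by norm_num)
      _ = junkC β' * ENNReal.ofReal (δ ^ β) := by
          rw [junkC, add_mul]
          congr 1
          rw [mul_comm]

/-- Transfer principle: if every small `H₂`-rectangle can be covered by `H₁`-rectangles
with cost `≤ C δ^β` (in exponent `β'`), then vanishing `H₂`-content in exponent `β`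
implies vanishing `H₁`-content in exponent `β'`. -/
lemma transfer (d : ℕ) (H₁ H₂ β β' : ℝ) (hβ : 0 < β) (C : ℝ≥0∞) (hC : C ≠ ⊤)
    (hcov : ∀ a b δ, 0 < δ → δ ≤ 1 →
      ∃ r' : ℕ → ℝ × (Fin d → ℝ) × ℝ, (∀ m, 0 < (r' m).2.2) ∧
        parRect d H₂ a b δ ⊆ ⋃ m, parRect d H₁ (r' m).1 (r' m).2.1 (r' m).2.2 ∧
        ∑' m, ENNReal.ofReal ((r' m).2.2 ^ β') ≤ C * ENNReal.ofReal (δ ^ β))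
    (F : Set (ℝ × (Fin d → ℝ))) (h0 : parContent d H₂ β F = 0) :
    parContent d H₁ β' F = 0 := by
  classical
  refine le_antisymm (ENNReal.le_of_forall_pos_le_add fun ε hε _ => ?_) zero_le
  rw [zero_add]
  set t : ℝ≥0∞ := min 1 ((ε : ℝ≥0∞) / (C + 1)) with hts
  have htpos : 0 < t := by
    refine lt_min zero_lt_one ?_
    exact ENNReal.div_pos (by exact_mod_cast hε.ne') (by simp [hC, ENNReal.add_ne_top])
  have hlt : parContent d H₂ β F < t := by rw [h0]; exact htpos
  rw [parContent] at hlt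
  simp only [iInf_lt_iff] at hlt
  obtain ⟨r, hrpos, hrcov, hrsum⟩ := hlt
  -- each δ_n is at most 1
  have hδ1 : ∀ n, (r n).2.2 ≤ 1 := by
    intro n
    by_contra hcon
    push_neg at hcon
    have h1 : (1 : ℝ) < (r n).2.2 ^ β :=
      (Real.one_lt_rpow_iff_of_pos (hrpos n)).mpr (Or.inl ⟨hcon, hβ⟩)
    have h2 : ENNReal.ofReal ((r n).2.2 ^ β) < 1 :=
      lt_of_le_of_lt (ENNReal.le_tsum n) (lt_of_lt_of_le hrsum (min_le_left _ _))
    rw [ENNReal.ofReal_lt_one] at h2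
    linarith
  -- choose the covering of each rectangle
  choose r' hpos' hcov' hsum' using fun n =>
    hcov (r n).1 (r n).2.1 (r n).2.2 (hrpos n) (hδ1 n)
  set e : ℕ ≃ ℕ × ℕ := (Denumerable.eqv (ℕ × ℕ)).symm with he
  set R : ℕ → ℝ × (Fin d → ℝ) × ℝ := fun i => r' (e i).1 (e i).2 with hR
  have hRpos : ∀ i, 0 < (R i).2.2 := fun i => hpos' _ _
  have hRcov : F ⊆ ⋃ i, parRect d H₁ (R i).1 (R i).2.1 (R i).2.2 := by
    intro x hx
    obtain ⟨_, ⟨n, rfl⟩, hxn⟩ := hrcov hx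
    obtain ⟨_, ⟨m, rfl⟩, hxm⟩ := hcov' n hxn
    refine Set.mem_iUnion.mpr ⟨e.symm (n, m), ?_⟩
    simp only [hR, Equiv.apply_symm_apply]
    exact hxm
  have hle : parContent d H₁ β' F ≤ ∑' i, ENNReal.ofReal ((R i).2.2 ^ β') := by
    rw [parContent]
    exact iInf_le_of_le R (iInf_le_of_le hRpos (iInf_le _ hRcov))
  refine hle.trans ?_
  have hsum2 : ∑' i, ENNReal.ofReal ((R i).2.2 ^ β')
      = ∑' n, ∑' m, ENNReal.ofReal ((r' n m).2.2 ^ β') := by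
    rw [hR]
    rw [e.tsum_eq (fun p : ℕ × ℕ => ENNReal.ofReal ((r' p.1 p.2).2.2 ^ β'))]
    exact ENNReal.tsum_prod (f := fun n m => ENNReal.ofReal ((r' n m).2.2 ^ β'))
  rw [hsum2]
  calc ∑' n, ∑' m, ENNReal.ofReal ((r' n m).2.2 ^ β')
      ≤ ∑' n, C * ENNReal.ofReal ((r n).2.2 ^ β) := ENNReal.tsum_le_tsum hsum'
    _ = C * ∑' n, ENNReal.ofReal ((r n).2.2 ^ β) := ENNReal.tsum_mul_left
    _ ≤ C * ((ε : ℝ≥0∞) / (C + 1)) := by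
        gcongr
        exact le_trans hrsum.le (min_le_right _ _)
    _ ≤ (C + 1) * ((ε : ℝ≥0∞) / (C + 1)) := by gcongr; exact le_self_add
    _ ≤ ε := by
        rw [ENNReal.mul_div_cancel' (by simp) (by simp [hC, ENNReal.add_ne_top])]

lemma contentA (d : ℕ) (H H' β : ℝ) (hH : H ∈ Set.Ioo (0:ℝ) 1)
    (hH' : H' ∈ Set.Ioo (0:ℝ) 1) (hHH' : H < H') (hβ : 0 < β)
    (F : Set (ℝ × (Fin d → ℝ))) (h0 : parContent d H' β F = 0) :
    parContent d H β F = 0 := by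
  refine transfer d H H' β β hβ (junkC β) (junkC_ne_top hβ) ?_ F h0
  intro a b δ hδ hδ1
  refine cover_block d H H' β β hβ a b δ δ 1 hδ hδ le_rfl ?_ ?_ ?_ ?_
  · exact Real.rpow_le_rpow_of_exponent_ge hδ hδ1 hHH'.le
  · simp
  · have : (0:ℝ) < δ ^ β := Real.rpow_pos_of_pos hδ β
    push_cast; nlinarith
  · exact le_rfl

lemma contentB (d : ℕ) (H H' β : ℝ) (hH : H ∈ Set.Ioo (0:ℝ) 1)
    (hH' : H' ∈ Set.Ioo (0:ℝ) 1) (hHH' : H < H') (hβ : 0 < β)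
    (F : Set (ℝ × (Fin d → ℝ))) (h0 : parContent d H β F = 0) :
    parContent d H' (H' / H * β) F = 0 := by
  have hH0 := hH.1; have hH'0 := hH'.1
  have hβ' : 0 < H' / H * β := by positivity
  have hcanc : H / H' * (H' / H) = 1 := by
    rw [div_mul_div_comm, mul_comm H' H, div_self (mul_pos hH0 hH'0).ne']
  refine transfer d H' H β (H' / H * β) hβ (junkC (H' / H * β)) (junkC_ne_top hβ') ?_ F h0
  intro a b δ hδ hδ1
  have hσpos : (0:ℝ) < δ ^ (H / H') := Real.rpow_pos_of_pos hδ _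
  have hkey : (δ ^ (H / H')) ^ (H' / H * β) = δ ^ β := by
    rw [← Real.rpow_mul hδ.le, ← mul_assoc, hcanc, one_mul]
  have hspace : δ ^ H = (δ ^ (H / H')) ^ H' := by
    rw [← Real.rpow_mul hδ.le, div_mul_cancel₀ H hH'0.ne']
  refine cover_block d H' H β (H' / H * β) hβ' a b δ (δ ^ (H / H')) 1 hδ hσpos le_rfl ?_ ?_ ?_ ?_
  · rw [hspace]
  · have h : δ ^ (1:ℝ) ≤ δ ^ (H / H') := by
      refine Real.rpow_le_rpow_of_exponent_ge hδ hδ1 ?_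
      rw [div_le_one hH'0]
      exact hHH'.le
    rw [Real.rpow_one] at h
    simpa using h
  · rw [hkey]
    have : (0:ℝ) < δ ^ β := Real.rpow_pos_of_pos hδ β
    push_cast; nlinarith
  · rw [hkey]

lemma contentC (d : ℕ) (H H' β : ℝ) (hH : H ∈ Set.Ioo (0:ℝ) 1)
    (hH' : H' ∈ Set.Ioo (0:ℝ) 1) (hHH' : H < H') (hβ : 0 < β)
    (F : Set (ℝ × (Fin d → ℝ))) (h0 : parContent d H' β F = 0) :
    parContent d H (H / H' * β + (1 - H / H')) F = 0 := by
  have hH0 := hH.1; have hH'0 := hH'.1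
  have hHH'lt : H / H' < 1 := (div_lt_one hH'0).mpr hHH'
  have hβ' : 0 < H / H' * β + (1 - H / H') := by
    have h1 : 0 < 1 - H / H' := by linarith
    have h2 : 0 ≤ H / H' * β := by positivity
    linarith
  have hcanc : H' / H * (H / H') = 1 := by
    rw [div_mul_div_comm, mul_comm H H', div_self (mul_pos hH'0 hH0).ne']
  have hexp : H' / H * (H / H' * β + (1 - H / H')) = β - 1 + H' / H := by
    have e1 : H' / H * (H / H' * β) = β := by
      rw [← mul_assoc, hcanc, one_mul]
    have e2 : H' / H * (H / H') = 1 := hcanc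
    calc H' / H * (H / H' * β + (1 - H / H'))
        = H' / H * (H / H' * β) + H' / H - H' / H * (H / H') := by ring
      _ = β - 1 + H' / H := by rw [e1, e2]; ring
  refine transfer d H H' β _ hβ (junkC (H / H' * β + (1 - H / H'))) (junkC_ne_top hβ') ?_ F h0
  intro a b δ hδ hδ1
  have hσpos : (0:ℝ) < δ ^ (H' / H) := Real.rpow_pos_of_pos hδ _
  set k : ℕ := ⌈δ ^ (1 - H' / H)⌉₊ with hkdef
  have hxpos : (0:ℝ) < δ ^ (1 - H' / H) := Real.rpow_pos_of_pos hδ _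
  have hxge1 : (1:ℝ) ≤ δ ^ (1 - H' / H) := by
    calc (1:ℝ) = δ ^ (0:ℝ) := (Real.rpow_zero δ).symm
      _ ≤ δ ^ (1 - H' / H) := by
          refine Real.rpow_le_rpow_of_exponent_ge hδ hδ1 ?_
          have : 1 < H' / H := (one_lt_div hH0).mpr hHH'
          linarith
  have hk1 : 1 ≤ k := Nat.one_le_ceil_iff.mpr hxpos
  have hkx : (k : ℝ) ≤ 2 * δ ^ (1 - H' / H) := by
    have h := Nat.ceil_lt_add_one hxpos.le
    have : (k : ℝ) < δ ^ (1 - H' / H) + 1 := by rw [hkdef]; exact_mod_cast h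
    linarith
  have hσβ' : (δ ^ (H' / H)) ^ (H / H' * β + (1 - H / H')) = δ ^ (β - 1 + H' / H) := by
    rw [← Real.rpow_mul hδ.le, ← hexp]
  have hprod : δ ^ (1 - H' / H) * δ ^ (β - 1 + H' / H) = δ ^ β := by
    rw [← Real.rpow_add hδ]
    congr 1
    ring
  refine cover_block d H H' β _ hβ' a b δ (δ ^ (H' / H)) k hδ hσpos hk1 ?_ ?_ ?_ ?_
  · rw [← Real.rpow_mul hδ.le, div_mul_cancel₀ H' hH0.ne']
  · have h1 : δ ^ (1 - H' / H) ≤ (k : ℝ) := Nat.le_ceil _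
    have h2 : δ ^ (1 - H' / H) * δ ^ (H' / H) = δ := by
      rw [← Real.rpow_add hδ]
      norm_num
    calc δ = δ ^ (1 - H' / H) * δ ^ (H' / H) := h2.symm
      _ ≤ (k : ℝ) * δ ^ (H' / H) := mul_le_mul_of_nonneg_right h1 hσpos.le
  · rw [hσβ']
    calc (k : ℝ) * δ ^ (β - 1 + H' / H)
        ≤ (2 * δ ^ (1 - H' / H)) * δ ^ (β - 1 + H' / H) :=
          mul_le_mul_of_nonneg_right hkx (Real.rpow_pos_of_pos hδ _).le
      _ = 2 * δ ^ β := by rw [mul_assoc, hprod]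
  · rw [hσβ']
    refine Real.rpow_le_rpow_of_exponent_ge hδ hδ1 ?_
    have : 1 ≤ H' / H := le_of_lt ((one_lt_div hH0).mpr hHH')
    linarith

/-- For `F ⊂ ℝ₊ × ℝ^d` and `H, H' ∈ (0,1)` with `H < H'`:
`max(dim_{Ψ,H}(F), (H'/H)·dim_{Ψ,H}(F) + 1 − H'/H) ≤ dim_{Ψ,H'}(F)`. -/
theorem parDim_lower_comparison (d : ℕ) (H H' : ℝ) (hH : H ∈ Set.Ioo (0:ℝ) 1)
    (hH' : H' ∈ Set.Ioo (0:ℝ) 1) (hHH' : H < H')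
    (F : Set (ℝ × (Fin d → ℝ))) (hF : ∀ p ∈ F, 0 ≤ p.1) :
    max (parDim d H F) (H' / H * parDim d H F + 1 - H' / H) ≤ parDim d H' F := by
  have hH0 := hH.1; have hH'0 := hH'.1
  have hr1 : 1 < H' / H := (one_lt_div hH0).mpr hHH'
  set S : Set ℝ := {β : ℝ | 0 ≤ β ∧ parContent d H β F = 0} with hS
  set S' : Set ℝ := {β : ℝ | 0 ≤ β ∧ parContent d H' β F = 0} with hS'
  have hbdd : BddBelow S := ⟨0, fun β hβ => hβ.1⟩
  have hpos : ∀ β ∈ S, 0 < β := by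
    rintro β ⟨hβ0, hβc⟩
    rcases hβ0.lt_or_eq with h | h
    · exact h
    · exfalso
      rw [← h] at hβc
      have := one_le_parContent_zero d H F
      rw [hβc] at this
      exact (not_le.mpr zero_lt_one) this
  have hpos' : ∀ β ∈ S', 0 < β := by
    rintro β ⟨hβ0, hβc⟩
    rcases hβ0.lt_or_eq with h | h
    · exact h
    · exfalso
      rw [← h] at hβc
      have := one_le_parContent_zero d H' F
      rw [hβc] at this
      exact (not_le.mpr zero_lt_one) this
  have hsub : S' ⊆ S := by
    rintro β hβ
    exact ⟨hβ.1, contentA d H H' β hH hH' hHH' (hpos' β hβ) F hβ.2⟩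
  rcases Set.eq_empty_or_nonempty S' with hemp | hne
  · -- S' empty forces S empty
    have hSemp : S = ∅ := by
      by_contra h
      obtain ⟨β, hβ⟩ := Set.nonempty_iff_ne_empty.mpr h
      have hβpos := hpos β hβ
      have : H' / H * β ∈ S' := by
        refine ⟨by positivity, contentB d H H' β hH hH' hHH' hβpos F hβ.2⟩
      rw [hemp] at this
      exact this
    have hD : parDim d H F = 0 := by rw [parDim, ← hS, hSemp, Real.sInf_empty]
    have hD' : parDim d H' F = 0 := by rw [parDim, ← hS', hemp, Real.sInf_empty]
    rw [hD, hD']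
    rw [max_le_iff]
    constructor
    · linarith
    · linarith
  · -- S' nonempty
    have hDeq : parDim d H F = sInf S := by rw [parDim, hS]
    have hD'eq : parDim d H' F = sInf S' := by rw [parDim, hS']
    rw [hDeq, hD'eq, max_le_iff]
    constructor
    · exact csInf_le_csInf hbdd hne hsub
    · -- second bound
      refine le_csInf hne ?_
      intro β hβ
      have hβpos := hpos' β hβ
      have hmem : H / H' * β + (1 - H / H') ∈ S := by
        refine ⟨?_, contentC d H H' β hH hH' hHH' hβpos F hβ.2⟩
        have h1 : H / H' < 1 := (div_lt_one hH'0).mpr hHH'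
        have h2 : 0 ≤ H / H' * β := by positivity
        linarith
      have hle : sInf S ≤ H / H' * β + (1 - H / H') := csInf_le hbdd hmem
      have hHne : H ≠ 0 := ne_of_gt hH0
      have hH'ne : H' ≠ 0 := ne_of_gt hH'0
      have hkey : H' / H * (H / H' * β + (1 - H / H')) = β + H' / H - 1 := by
        field_simp
        ring
      have := mul_le_mul_of_nonneg_left hle (le_of_lt (lt_trans zero_lt_one hr1))
      rw [hkey] at this
      linarith
end
end

section
/- Let F ⊂ ℝ₊ × ℝ^d and let H, H' ∈ (0,1) with H < H'. Then dim_{Ψ,H'}(F) ≤ min( (H'/H)·dim_{Ψ,H}(F), dim_{Ψ,H}(F) + (H'−H)·d ). -/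
open MeasureTheory ENNReal Set

noncomputable section

lemma parContent_le (d : ℕ) (H β : ℝ) (F : Set (ℝ × (Fin d → ℝ)))
    (r : ℕ → ℝ × (Fin d → ℝ) × ℝ) (h1 : ∀ n, 0 < (r n).2.2)
    (h2 : F ⊆ ⋃ n, parRect d H (r n).1 (r n).2.1 (r n).2.2) :
    parContent d H β F ≤ ∑' n, ENNReal.ofReal ((r n).2.2 ^ β) :=
  iInf_le_of_le r (iInf_le_of_le h1 (iInf_le_of_le h2 le_rfl))

lemma parContent_zero_elim {d : ℕ} {H β : ℝ} {F : Set (ℝ × (Fin d → ℝ))}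
    (h : parContent d H β F = 0) {ε : ℝ≥0∞} (hε : 0 < ε) :
    ∃ r : ℕ → ℝ × (Fin d → ℝ) × ℝ, (∀ n, 0 < (r n).2.2) ∧
      (F ⊆ ⋃ n, parRect d H (r n).1 (r n).2.1 (r n).2.2) ∧
      ∑' n, ENNReal.ofReal ((r n).2.2 ^ β) < ε := by
  have : parContent d H β F < ε := h ▸ hε
  simp only [parContent, iInf_lt_iff, exists_prop] at this
  tauto

lemma parContent_zero_of {d : ℕ} {H β : ℝ} {F : Set (ℝ × (Fin d → ℝ))}
    (h : ∀ ε : ℝ≥0∞, 0 < ε → parContent d H β F ≤ ε) : parContent d H β F = 0 := by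
  refine le_antisymm ?_ (zero_le)
  refine ENNReal.le_of_forall_pos_le_add fun ε hε _ => ?_
  simpa using h ε (by exact_mod_cast hε)

lemma parContent_beta_zero (d : ℕ) (H : ℝ) (F : Set (ℝ × (Fin d → ℝ))) :
    parContent d H 0 F = ⊤ := by
  rw [parContent, iInf_eq_top]
  intro r
  rw [iInf_eq_top]
  intro h1
  rw [iInf_eq_top]
  intro _
  have : ∀ n : ℕ, ENNReal.ofReal ((r n).2.2 ^ (0:ℝ)) = 1 := by
    intro n; rw [Real.rpow_zero]; simp
  rw [tsum_congr this]
  simp [ENNReal.tsum_const_eq_top_of_ne_zero]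
lemma parContent_le_tsum {d : ℕ} {H β : ℝ} {F : Set (ℝ × (Fin d → ℝ))}
    {ι : Type} [Countable ι] [Infinite ι] (s : ι → ℝ × (Fin d → ℝ) × ℝ)
    (h1 : ∀ i, 0 < (s i).2.2)
    (h2 : F ⊆ ⋃ i, parRect d H (s i).1 (s i).2.1 (s i).2.2) :
    parContent d H β F ≤ ∑' i, ENNReal.ofReal ((s i).2.2 ^ β) := by
  obtain ⟨D⟩ := nonempty_denumerable_iff.2 ⟨‹Countable ι›, ‹Infinite ι›⟩
  set e : ℕ ≃ ι := (Denumerable.eqv ι).symm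
  have hcov : F ⊆ ⋃ n : ℕ, parRect d H (s (e n)).1 (s (e n)).2.1 (s (e n)).2.2 := by
    refine h2.trans ?_
    rw [← e.surjective.iUnion_comp (fun i => parRect d H (s i).1 (s i).2.1 (s i).2.2)]
  calc parContent d H β F ≤ ∑' n : ℕ, ENNReal.ofReal ((s (e n)).2.2 ^ β) :=
        parContent_le d H β F (fun n => s (e n)) (fun n => h1 _) hcov
    _ = ∑' i, ENNReal.ofReal ((s i).2.2 ^ β) := e.tsum_eq fun i => ENNReal.ofReal ((s i).2.2 ^ β)

-- δ < 1 from small content term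
lemma delta_lt_one {β δ : ℝ} (hβ : 0 < β) (hδ : 0 < δ)
    (h : ENNReal.ofReal (δ ^ β) < 1) : δ < 1 := by
  by_contra hge
  push_neg at hge
  have : (1:ℝ) ≤ δ ^ β := Real.one_le_rpow hge hβ.le
  have : (1:ℝ≥0∞) ≤ ENNReal.ofReal (δ ^ β) := by
    simpa using ENNReal.ofReal_le_ofReal this
  exact absurd h (not_lt.2 this)
lemma parRect_subset {d : ℕ} {H H' a δ δ' : ℝ} {b : Fin d → ℝ}
    (ht : δ ≤ δ') (hs : δ ^ H ≤ δ' ^ H') :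
    parRect d H a b δ ⊆ parRect d H' a b δ' := by
  rintro ⟨x, y⟩ ⟨hx, hy⟩
  refine ⟨Icc_subset_Icc le_rfl (by linarith) hx, fun j hj => ?_⟩
  have h := hy j hj
  exact Icc_subset_Icc le_rfl (by dsimp only; linarith) h

lemma transfer_rev {d : ℕ} {H H' β : ℝ} {F : Set (ℝ × (Fin d → ℝ))}
    (hH : 0 < H) (hHH' : H ≤ H') (hβ : 0 < β)
    (h : parContent d H' β F = 0) : parContent d H β F = 0 := by
  refine parContent_zero_of fun ε hε => ?_
  obtain ⟨r, h1, h2, h3⟩ := parContent_zero_elim h (ε := min ε 1) (lt_min hε one_pos)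
  have hδ1 : ∀ n, (r n).2.2 < 1 := fun n =>
    delta_lt_one hβ (h1 n) (lt_of_le_of_lt (ENNReal.le_tsum n) (h3.trans_le (min_le_right _ _)))
  have hcov : F ⊆ ⋃ n, parRect d H (r n).1 (r n).2.1 (r n).2.2 := by
    refine h2.trans (Set.iUnion_mono fun n => ?_)
    exact parRect_subset le_rfl
      (Real.rpow_le_rpow_of_exponent_ge (h1 n) (hδ1 n).le hHH')
  exact (parContent_le d H β F r h1 hcov).trans (h3.le.trans (min_le_left _ _))

lemma transfer1 {d : ℕ} {H H' β : ℝ} {F : Set (ℝ × (Fin d → ℝ))}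
    (hH : 0 < H) (hH'0 : 0 < H') (hHH' : H ≤ H') (hβ : 0 < β)
    (h : parContent d H β F = 0) : parContent d H' (H' / H * β) F = 0 := by
  refine parContent_zero_of fun ε hε => ?_
  obtain ⟨r, h1, h2, h3⟩ := parContent_zero_elim h (ε := min ε 1) (lt_min hε one_pos)
  have hδ1 : ∀ n, (r n).2.2 < 1 := fun n =>
    delta_lt_one hβ (h1 n) (lt_of_le_of_lt (ENNReal.le_tsum n) (h3.trans_le (min_le_right _ _)))
  set s : ℕ → ℝ × (Fin d → ℝ) × ℝ :=
    fun n => ((r n).1, (r n).2.1, (r n).2.2 ^ (H / H')) with hs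
  have h1' : ∀ n, 0 < (s n).2.2 := fun n => Real.rpow_pos_of_pos (h1 n) _
  have hcov : F ⊆ ⋃ n, parRect d H' (s n).1 (s n).2.1 (s n).2.2 := by
    refine h2.trans (Set.iUnion_mono fun n => parRect_subset ?_ (le_of_eq ?_))
    · calc (r n).2.2 = (r n).2.2 ^ (1:ℝ) := (Real.rpow_one _).symm
        _ ≤ (r n).2.2 ^ (H / H') :=
          Real.rpow_le_rpow_of_exponent_ge (h1 n) (hδ1 n).le (div_le_one_of_le₀ hHH' hH'0.le)
    · show (r n).2.2 ^ H = ((r n).2.2 ^ (H / H')) ^ H'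
      rw [← Real.rpow_mul (h1 n).le, div_mul_cancel₀ _ hH'0.ne']
  have hsum : ∑' n, ENNReal.ofReal ((s n).2.2 ^ (H' / H * β))
      = ∑' n, ENNReal.ofReal ((r n).2.2 ^ β) := by
    refine tsum_congr fun n => ?_
    congr 1
    show ((r n).2.2 ^ (H / H')) ^ (H' / H * β) = _
    rw [← Real.rpow_mul (h1 n).le]
    congr 1
    field_simp
  refine (parContent_le d H' (H' / H * β) F s h1' hcov).trans ?_
  rw [hsum]
  exact h3.le.trans (min_le_left _ _)
lemma transfer2 {d : ℕ} {H H' β : ℝ} {F : Set (ℝ × (Fin d → ℝ))}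
    (hH : 0 < H) (hHH' : H < H') (hβ : 0 < β)
    (h : parContent d H β F = 0) : parContent d H' (β + (H' - H) * d) F = 0 := by
  refine parContent_zero_of fun ε hε => ?_
  set C : ℝ≥0∞ := (2:ℝ≥0∞) ^ d with hC
  have hC0 : C ≠ 0 := by positivity
  have hCtop : C ≠ ⊤ := by
    simp [hC]
  have hε0 : (0:ℝ≥0∞) < min (ε / C) 1 :=
    lt_min (ENNReal.div_pos hε.ne' hCtop) one_pos
  obtain ⟨r, h1, h2, h3⟩ := parContent_zero_elim h hε0
  have hδ1 : ∀ n, (r n).2.2 < 1 := fun n =>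
    delta_lt_one hβ (h1 n) (lt_of_le_of_lt (ENNReal.le_tsum n) (h3.trans_le (min_le_right _ _)))
  set N : ℕ → ℕ := fun n => ⌈(r n).2.2 ^ (H - H')⌉₊ with hNdef
  have hrp1 : ∀ n, (1:ℝ) ≤ (r n).2.2 ^ (H - H') := by
    intro n
    exact le_of_lt ((Real.one_lt_rpow_iff_of_pos (h1 n)).2 (Or.inr ⟨hδ1 n, by linarith⟩))
  have hN1 : ∀ n, 1 ≤ N n := fun n =>
    Nat.one_le_ceil_iff.2 (lt_of_lt_of_le one_pos (hrp1 n))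
  set ι := Σ n : ℕ, (Fin d → Fin (N n)) with hι
  haveI : Infinite ι := Infinite.of_injective
    (fun n : ℕ => (⟨n, fun _ => ⟨0, hN1 n⟩⟩ : ι)) (fun a b hab => congrArg Sigma.fst hab)
  set s : ι → ℝ × (Fin d → ℝ) × ℝ := fun i =>
    ((r i.1).1, fun j => (r i.1).2.1 j + (i.2 j : ℝ) * (r i.1).2.2 ^ H', (r i.1).2.2) with hsdef
  have h1s : ∀ i, 0 < (s i).2.2 := fun i => h1 i.1
  -- coverage
  have hcov : F ⊆ ⋃ i, parRect d H' (s i).1 (s i).2.1 (s i).2.2 := by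
    intro p hp
    obtain ⟨n, hpn⟩ := Set.mem_iUnion.1 (h2 hp)
    obtain ⟨hpt, hps⟩ := hpn
    set δ := (r n).2.2 with hδdef
    have hδ0 : 0 < δ := h1 n
    have hc0 : 0 < δ ^ H' := Real.rpow_pos_of_pos hδ0 _
    set c := δ ^ H' with hcdef
    set t : Fin d → ℝ := fun j => (p.2 j - (r n).2.1 j) / c with htdef
    have ht0 : ∀ j, 0 ≤ t j := by
      intro j
      have := (hps j (Set.mem_univ j)).1
      exact div_nonneg (by linarith) hc0.le
    have htN : ∀ j, t j ≤ N n := by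
      intro j
      have hub := (hps j (Set.mem_univ j)).2
      have : t j ≤ δ ^ H / c := by
        have : p.2 j - (r n).2.1 j ≤ δ ^ H := by linarith
        exact (div_le_div_iff_of_pos_right hc0).2 this
      refine this.trans ?_
      rw [hcdef, ← Real.rpow_sub hδ0]
      exact (Nat.le_ceil _)
    set k : Fin d → Fin (N n) := fun j =>
      ⟨min ⌊t j⌋₊ (N n - 1), lt_of_le_of_lt (min_le_right _ _) (Nat.sub_lt (hN1 n) one_pos)⟩
      with hkdef
    refine Set.mem_iUnion.2 ⟨⟨n, k⟩, hpt, fun j _ => ?_⟩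
    have hklet : ((k j : ℕ) : ℝ) ≤ t j := by
      have : ((k j : ℕ) : ℝ) ≤ (⌊t j⌋₊ : ℝ) := by
        exact_mod_cast min_le_left _ _
      exact this.trans (Nat.floor_le (ht0 j))
    have htlek : t j ≤ (k j : ℕ) + 1 := by
      rcases le_or_gt ⌊t j⌋₊ (N n - 1) with hle | hlt
      · have : (k j : ℕ) = ⌊t j⌋₊ := min_eq_left hle
        rw [this]
        exact (Nat.lt_floor_add_one (t j)).le
      · have hk : (k j : ℕ) = N n - 1 := min_eq_right hlt.le
        rw [hk]
        have : ((N n - 1 : ℕ) : ℝ) + 1 = (N n : ℝ) := by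
          have := hN1 n
          push_cast [Nat.cast_sub this]
          ring
        rw [this]
        exact htN j
    constructor
    · show (r n).2.1 j + (k j : ℝ) * c ≤ p.2 j
      have := mul_le_mul_of_nonneg_right hklet hc0.le
      rw [div_mul_cancel₀ _ hc0.ne'] at *
      have ht' : t j * c = p.2 j - (r n).2.1 j := by
        rw [htdef]; field_simp
      nlinarith [mul_le_mul_of_nonneg_right hklet hc0.le]
    · show p.2 j ≤ (r n).2.1 j + (k j : ℝ) * c + δ ^ H'
      have hmul := mul_le_mul_of_nonneg_right htlek hc0.le
      have ht' : t j * c = p.2 j - (r n).2.1 j := by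
        rw [htdef]; field_simp
      rw [ht'] at hmul
      rw [← hcdef]
      nlinarith
  -- cost bound
  have hcost : ∑' i : ι, ENNReal.ofReal ((s i).2.2 ^ (β + (H' - H) * d)) ≤ ε := by
    have hsig : ∑' i : ι, ENNReal.ofReal ((s i).2.2 ^ (β + (H' - H) * d))
        = ∑' n : ℕ, ((N n ^ d : ℕ) : ℝ≥0∞) * ENNReal.ofReal ((r n).2.2 ^ (β + (H' - H) * d)) := by
      rw [ENNReal.tsum_sigma']
      refine tsum_congr fun n => ?_
      rw [tsum_fintype]
      simp [hsdef, Finset.sum_const, nsmul_eq_mul, Fintype.card_fun]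
    rw [hsig]
    have hterm : ∀ n, ((N n ^ d : ℕ) : ℝ≥0∞) * ENNReal.ofReal ((r n).2.2 ^ (β + (H' - H) * d))
        ≤ C * ENNReal.ofReal ((r n).2.2 ^ β) := by
      intro n
      set δ := (r n).2.2 with hδdef
      have hδ0 : 0 < δ := h1 n
      have hreal : ((N n ^ d : ℕ) : ℝ) * δ ^ (β + (H' - H) * d) ≤ 2 ^ d * δ ^ β := by
        have hNle : (N n : ℝ) ≤ 2 * δ ^ (H - H') := by
          have := (Nat.ceil_lt_add_one (le_of_lt (Real.rpow_pos_of_pos hδ0 (H - H')))).le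
          have h1' := hrp1 n
          calc (N n : ℝ) ≤ δ ^ (H - H') + 1 := this
            _ ≤ 2 * δ ^ (H - H') := by linarith
        have hNd : ((N n : ℝ)) ^ d ≤ (2 * δ ^ (H - H')) ^ d :=
          pow_le_pow_left₀ (by positivity) hNle d
        have hrw : (2 * δ ^ (H - H')) ^ d * δ ^ (β + (H' - H) * d) = 2 ^ d * δ ^ β := by
          rw [mul_pow, ← Real.rpow_natCast (δ ^ (H - H')) d, ← Real.rpow_mul hδ0.le,
            mul_assoc, ← Real.rpow_add hδ0]
          ring_nf
        calc ((N n ^ d : ℕ) : ℝ) * δ ^ (β + (H' - H) * d)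
            = ((N n : ℝ)) ^ d * δ ^ (β + (H' - H) * d) := by push_cast; ring
          _ ≤ (2 * δ ^ (H - H')) ^ d * δ ^ (β + (H' - H) * d) := by
              have : (0:ℝ) ≤ δ ^ (β + (H' - H) * d) := (Real.rpow_pos_of_pos hδ0 _).le
              exact mul_le_mul_of_nonneg_right hNd this
          _ = 2 ^ d * δ ^ β := hrw
      calc ((N n ^ d : ℕ) : ℝ≥0∞) * ENNReal.ofReal (δ ^ (β + (H' - H) * d))
          = ENNReal.ofReal (((N n ^ d : ℕ) : ℝ) * δ ^ (β + (H' - H) * d)) := by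
            rw [ENNReal.ofReal_mul (by positivity), ENNReal.ofReal_natCast]
        _ ≤ ENNReal.ofReal (2 ^ d * δ ^ β) := ENNReal.ofReal_le_ofReal hreal
        _ = C * ENNReal.ofReal (δ ^ β) := by
            rw [ENNReal.ofReal_mul (by positivity), hC]
            congr 1
            rw [ENNReal.ofReal_pow (by norm_num)]
            norm_num
    calc ∑' n : ℕ, ((N n ^ d : ℕ) : ℝ≥0∞) * ENNReal.ofReal ((r n).2.2 ^ (β + (H' - H) * d))
        ≤ ∑' n : ℕ, C * ENNReal.ofReal ((r n).2.2 ^ β) := ENNReal.tsum_le_tsum hterm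
      _ = C * ∑' n : ℕ, ENNReal.ofReal ((r n).2.2 ^ β) := ENNReal.tsum_mul_left
      _ ≤ C * (ε / C) := mul_le_mul_right (h3.le.trans (min_le_left _ _)) C
      _ ≤ ε := ENNReal.mul_div_le
  exact (parContent_le_tsum s h1s hcov).trans hcost

/-- For `F ⊂ ℝ₊ × ℝ^d` and `H, H' ∈ (0,1)` with `H < H'`:
`dim_{Ψ,H'}(F) ≤ min((H'/H)·dim_{Ψ,H}(F), dim_{Ψ,H}(F) + (H'−H)·d)`. -/
theorem parDim_upper_comparison (d : ℕ) (H H' : ℝ) (hH : H ∈ Set.Ioo (0:ℝ) 1)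
    (hH' : H' ∈ Set.Ioo (0:ℝ) 1) (hHH' : H < H')
    (F : Set (ℝ × (Fin d → ℝ))) (hF : ∀ p ∈ F, 0 ≤ p.1) :
    parDim d H' F ≤ min (H' / H * parDim d H F) (parDim d H F + (H' - H) * d) := by
  obtain ⟨hH0, hH1⟩ := hH
  obtain ⟨hH'0, hH'1⟩ := hH'
  set S := {β : ℝ | 0 ≤ β ∧ parContent d H β F = 0} with hS
  set S' := {β : ℝ | 0 ≤ β ∧ parContent d H' β F = 0} with hS'
  have hdim : parDim d H F = sInf S := rfl
  have hdim' : parDim d H' F = sInf S' := rfl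
  have hpos : ∀ β ∈ S, 0 < β := by
    rintro β ⟨hβ0, hβc⟩
    rcases hβ0.lt_or_eq with hlt | heq
    · exact hlt
    · rw [← heq, parContent_beta_zero] at hβc; simp at hβc
  have hpos' : ∀ β ∈ S', 0 < β := by
    rintro β ⟨hβ0, hβc⟩
    rcases hβ0.lt_or_eq with hlt | heq
    · exact hlt
    · rw [← heq, parContent_beta_zero] at hβc; simp at hβc
  by_cases hne : S.Nonempty
  · have mem1 : ∀ β ∈ S, H' / H * β ∈ S' := fun β hβ =>
      ⟨by have := hβ.1; positivity, transfer1 hH0 hH'0 hHH'.le (hpos β hβ) hβ.2⟩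
    have mem2 : ∀ β ∈ S, β + (H' - H) * d ∈ S' := fun β hβ =>
      ⟨add_nonneg hβ.1 (mul_nonneg (by linarith) (Nat.cast_nonneg d)), transfer2 hH0 hHH' (hpos β hβ) hβ.2⟩
    have hbdd' : BddBelow S' := ⟨0, fun β hβ => hβ.1⟩
    rw [hdim, hdim']
    refine le_min ?_ ?_
    · have key : ∀ β ∈ S, sInf S' ≤ H' / H * β := fun β hβ => csInf_le hbdd' (mem1 β hβ)
      have h2 : H / H' * sInf S' ≤ sInf S := by
        refine le_csInf hne fun β hβ => ?_
        have hq : (0:ℝ) < H / H' := div_pos hH0 hH'0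
        have hm := mul_le_mul_of_nonneg_left (key β hβ) hq.le
        have heq : H / H' * (H' / H * β) = β := by field_simp
        linarith
      have hq : (0:ℝ) < H' / H := div_pos hH'0 hH0
      have hm := mul_le_mul_of_nonneg_left h2 hq.le
      have heq : H' / H * (H / H' * sInf S') = sInf S' := by field_simp
      linarith
    · have key : ∀ β ∈ S, sInf S' ≤ β + (H' - H) * d := fun β hβ => csInf_le hbdd' (mem2 β hβ)
      have h2 : sInf S' - (H' - H) * d ≤ sInf S :=
        le_csInf hne fun β hβ => by linarith [key β hβ]
      linarith
  · have hne' : ¬ S'.Nonempty := by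
      rintro ⟨β, hβ⟩
      exact hne ⟨β, hβ.1, transfer_rev hH0 hHH'.le (hpos' β hβ) hβ.2⟩
    rw [Set.not_nonempty_iff_eq_empty] at hne hne'
    rw [hdim, hdim', hne, hne', Real.sInf_empty]
    have hd0 : (0:ℝ) ≤ (H' - H) * d := by
      have : (0:ℝ) ≤ (d:ℝ) := Nat.cast_nonneg d
      nlinarith
    refine le_min (by simp) (by simpa using hd0)
end
end

section
/- Let H ∈ (0,1), let A be a Borel subset of [0,1], let 0 < α ≤ H and let f : [0,1] → ℝ^d be α-Hölder continuous, i.e. there exists K ≥ 0 with ‖f(x)−f(y)‖_∞ ≤ K|x−y|^α for all x, y ∈ [0,1]. Then dim_{Ψ,H}(Gr_A(f)) ≤ min( (H/α)·dim(A), dim(A) + (H−α)·d ). -/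
open MeasureTheory ENNReal Set

noncomputable section

/-- Bounding `parContent` by a cover indexed by an arbitrary countable type,
at the price of an extra `ε`. -/
lemma parContent_le_aux {d : ℕ} {H β : ℝ} {F : Set (ℝ × (Fin d → ℝ))}
    (hβ : 0 < β) {ι : Type} [Countable ι] (g : ι → ℝ × (Fin d → ℝ) × ℝ)
    (hpos : ∀ i, 0 < (g i).2.2)
    (hcov : F ⊆ ⋃ i, parRect d H (g i).1 (g i).2.1 (g i).2.2)
    {ε : ℝ} (hε : 0 < ε) :
    parContent d H β F ≤ (∑' i, ENNReal.ofReal ((g i).2.2 ^ β)) + ENNReal.ofReal ε := by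
  classical
  obtain ⟨e, he⟩ := Countable.exists_injective_nat ι
  set dum : ℕ → ℝ := fun m => (ε / 2 / 2 ^ m) ^ β⁻¹ with hdum
  have hbase : ∀ m : ℕ, (0:ℝ) < ε / 2 / 2 ^ m := by intro m; positivity
  have hdumpos : ∀ m, 0 < dum m := fun m => Real.rpow_pos_of_pos (hbase m) _
  have hdumpow : ∀ m : ℕ, dum m ^ β = ε / 2 / 2 ^ m := by
    intro m
    rw [hdum]
    rw [← Real.rpow_mul (hbase m).le, inv_mul_cancel₀ hβ.ne', Real.rpow_one]
  set r : ℕ → ℝ × (Fin d → ℝ) × ℝ :=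
    fun m => if h : ∃ i, e i = m then g h.choose else (0, fun _ => 0, dum m) with hr
  have hre : ∀ i, r (e i) = g i := by
    intro i
    have h : ∃ i', e i' = e i := ⟨i, rfl⟩
    have : h.choose = i := he h.choose_spec
    rw [hr]; simp only [dif_pos h, this]
  have h1 : ∀ m, 0 < (r m).2.2 := by
    intro m
    rw [hr]
    by_cases h : ∃ i, e i = m
    · simp only [dif_pos h]; exact hpos _
    · simp only [dif_neg h]; exact hdumpos m
  have h2 : F ⊆ ⋃ m, parRect d H (r m).1 (r m).2.1 (r m).2.2 := by
    intro x hx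
    obtain ⟨_, ⟨i, rfl⟩, hxi⟩ := hcov hx
    exact Set.mem_iUnion.2 ⟨e i, by rw [hre i]; exact hxi⟩
  have key : parContent d H β F ≤ ∑' m, ENNReal.ofReal ((r m).2.2 ^ β) := by
    refine le_trans (iInf_le _ r) (le_trans (iInf_le _ h1) (iInf_le _ h2))
  refine key.trans ?_
  set u : ℕ → ℝ≥0∞ :=
    fun m => if h : ∃ i, e i = m then ENNReal.ofReal ((g h.choose).2.2 ^ β) else 0 with hu
  have hsum1 : ∑' m, ENNReal.ofReal ((r m).2.2 ^ β)
      ≤ (∑' m, u m) + ∑' m, ENNReal.ofReal (ε / 2 / 2 ^ m) := by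
    rw [← ENNReal.tsum_add]
    refine ENNReal.tsum_le_tsum fun m => ?_
    by_cases h : ∃ i, e i = m
    · rw [hr, hu]; simp only [dif_pos h]; exact le_self_add
    · rw [hr, hu]; simp only [dif_neg h, hdumpow m]; exact le_add_self
  have hsum2 : ∑' m, u m = ∑' i, ENNReal.ofReal ((g i).2.2 ^ β) := by
    rw [← he.tsum_eq]
    · refine tsum_congr fun i => ?_
      have h : ∃ i', e i' = e i := ⟨i, rfl⟩
      have hci : h.choose = i := he h.choose_spec
      rw [hu]; simp only [dif_pos h, hci]
    · intro m hm
      rw [Function.mem_support, hu] at hm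
      by_cases h : ∃ i, e i = m
      · exact ⟨h.choose, h.choose_spec⟩
      · simp only [dif_neg h] at hm; exact absurd rfl hm
  have hsum3 : ∑' m : ℕ, ENNReal.ofReal (ε / 2 / 2 ^ m) = ENNReal.ofReal ε := by
    rw [← ENNReal.ofReal_tsum_of_nonneg (fun m => (hbase m).le) (summable_geometric_two' ε),
      tsum_geometric_two' ε]
  calc ∑' m, ENNReal.ofReal ((r m).2.2 ^ β)
      ≤ (∑' m, u m) + ∑' m, ENNReal.ofReal (ε / 2 / 2 ^ m) := hsum1
    _ = (∑' i, ENNReal.ofReal ((g i).2.2 ^ β)) + ENNReal.ofReal ε := by rw [hsum2, hsum3]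

/-- From `dimH A < s` extract an efficient cover of `A` by closed intervals. -/
lemma exists_cover_of_dimH_lt {A : Set ℝ} {s : ℝ} (hs : 0 < s)
    (hdim : dimH A < ENNReal.ofReal s) {ε : ℝ} (hε : 0 < ε) :
    ∃ (c : ℕ → ℝ) (δ : ℕ → ℝ), (∀ n, 0 < δ n) ∧ (∀ n, δ n ≤ 1) ∧
      A ⊆ ⋃ n, Set.Icc (c n) (c n + δ n) ∧
      ∑' n, ENNReal.ofReal (δ n ^ s) ≤ ENNReal.ofReal (2 * ε) := by
  classical
  set η : ℝ := min ε 2⁻¹ with hηdef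
  have hη : 0 < η := lt_min hε (by norm_num)
  have hη2 : η ≤ 2⁻¹ := min_le_right _ _
  have hηε : η ≤ ε := min_le_left _ _
  set ρ : ℝ := (2⁻¹ : ℝ) ^ s⁻¹ with hρdef
  have hρ : 0 < ρ := Real.rpow_pos_of_pos (by norm_num) _
  have hρs : ρ ^ s = 2⁻¹ := by
    rw [hρdef, ← Real.rpow_mul (by norm_num), inv_mul_cancel₀ hs.ne', Real.rpow_one]
  -- Hausdorff measure is zero
  have hμ : μH[s] A = 0 := by
    have h1 : dimH A < ((s.toNNReal : NNReal) : ℝ≥0∞) := by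
      rwa [ENNReal.ofReal] at hdim
    have := hausdorffMeasure_of_dimH_lt h1
    rwa [Real.coe_toNNReal _ hs.le] at this
  rw [MeasureTheory.Measure.hausdorffMeasure_apply] at hμ
  have h0 : (⨅ (t : ℕ → Set ℝ) (_ : A ⊆ ⋃ n, t n)
      (_ : ∀ n, EMetric.diam (t n) ≤ ENNReal.ofReal ρ),
      ∑' n, ⨆ _ : (t n).Nonempty, EMetric.diam (t n) ^ s) = 0 := by
    refine le_antisymm ?_ (zero_le)
    refine le_trans ?_ hμ.le
    exact le_iSup₂ (f := fun r (_ : 0 < r) => ⨅ (t : ℕ → Set ℝ) (_ : A ⊆ ⋃ n, t n)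
      (_ : ∀ n, EMetric.diam (t n) ≤ r),
      ∑' n, ⨆ _ : (t n).Nonempty, EMetric.diam (t n) ^ s)
      (ENNReal.ofReal ρ) (ENNReal.ofReal_pos.2 hρ)
  have hlt : (⨅ (t : ℕ → Set ℝ) (_ : A ⊆ ⋃ n, t n)
      (_ : ∀ n, EMetric.diam (t n) ≤ ENNReal.ofReal ρ),
      ∑' n, ⨆ _ : (t n).Nonempty, EMetric.diam (t n) ^ s) < ENNReal.ofReal η := by
    rw [h0]; exact ENNReal.ofReal_pos.2 hη
  simp only [iInf_lt_iff] at hlt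
  obtain ⟨t, htA, htd, htsum⟩ := hlt
  have hbd : ∀ n, Bornology.IsBounded (t n) := by
    intro n
    rw [Metric.isBounded_iff_ediam_ne_top]
    exact ne_top_of_le_ne_top ENNReal.ofReal_ne_top (htd n)
  have hdiam_le : ∀ n, Metric.diam (t n) ≤ ρ := fun n =>
    ENNReal.toReal_le_of_le_ofReal hρ.le (htd n)
  set δ : ℕ → ℝ := fun n => (Metric.diam (t n) ^ s + η / 2 / 2 ^ n) ^ s⁻¹ with hδdef
  have hbasepos : ∀ n : ℕ, (0:ℝ) < Metric.diam (t n) ^ s + η / 2 / 2 ^ n := by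
    intro n
    have h1 : (0:ℝ) ≤ Metric.diam (t n) ^ s := Real.rpow_nonneg Metric.diam_nonneg _
    have h2 : (0:ℝ) < η / 2 / 2 ^ n := by positivity
    linarith
  have hδpos : ∀ n, 0 < δ n := fun n => Real.rpow_pos_of_pos (hbasepos n) _
  have hδpow : ∀ n, δ n ^ s = Metric.diam (t n) ^ s + η / 2 / 2 ^ n := by
    intro n
    rw [hδdef]
    rw [← Real.rpow_mul (hbasepos n).le, inv_mul_cancel₀ hs.ne', Real.rpow_one]
  have hδ1 : ∀ n, δ n ≤ 1 := by
    intro n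
    have hb : Metric.diam (t n) ^ s + η / 2 / 2 ^ n ≤ 1 := by
      have h1 : Metric.diam (t n) ^ s ≤ ρ ^ s :=
        Real.rpow_le_rpow Metric.diam_nonneg (hdiam_le n) hs.le
      have h2 : η / 2 / 2 ^ n ≤ η := by
        have h3 : (1:ℝ) ≤ 2 ^ n := one_le_pow₀ (by norm_num)
        rw [div_div]
        calc η / (2 * 2 ^ n) ≤ η / 2 := by
              apply div_le_div_of_nonneg_left hη.le (by norm_num)
              nlinarith
          _ ≤ η := by linarith
      rw [hρs] at h1
      have : η ≤ 2⁻¹ := hη2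
      linarith
    calc δ n = (Metric.diam (t n) ^ s + η / 2 / 2 ^ n) ^ s⁻¹ := rfl
      _ ≤ 1 ^ s⁻¹ := Real.rpow_le_rpow (hbasepos n).le hb (by positivity)
      _ = 1 := Real.one_rpow _
  have hdδ : ∀ n, Metric.diam (t n) ≤ δ n := by
    intro n
    have h1 : Metric.diam (t n) = (Metric.diam (t n) ^ s) ^ s⁻¹ := by
      rw [← Real.rpow_mul Metric.diam_nonneg, mul_inv_cancel₀ hs.ne', Real.rpow_one]
    rw [h1]
    refine Real.rpow_le_rpow (Real.rpow_nonneg Metric.diam_nonneg _) ?_ (by positivity)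
    have : (0:ℝ) < η / 2 / 2 ^ n := by positivity
    linarith
  refine ⟨fun n => sInf (t n), δ, hδpos, hδ1, ?_, ?_⟩
  · -- cover
    refine htA.trans (Set.iUnion_mono fun n => ?_)
    intro y hy
    have hne : (t n).Nonempty := ⟨y, hy⟩
    constructor
    · exact csInf_le (hbd n).bddBelow hy
    · have hall : ∀ z ∈ t n, y - Metric.diam (t n) ≤ z := by
        intro z hz
        have := Metric.dist_le_diam_of_mem (hbd n) hy hz
        rw [Real.dist_eq] at this
        have := abs_le.1 (this.trans_eq' rfl)  -- |y - z| ≤ diam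
        cases' abs_le.1 ((Real.dist_eq y z ▸ Metric.dist_le_diam_of_mem (hbd n) hy hz)) with h1 h2
        linarith
      have : y - Metric.diam (t n) ≤ sInf (t n) := le_csInf hne hall
      have := hdδ n
      linarith
  · -- sum bound
    have hterm : ∀ n, ENNReal.ofReal (δ n ^ s)
        = (⨆ _ : (t n).Nonempty, EMetric.diam (t n) ^ s) + ENNReal.ofReal (η / 2 / 2 ^ n) := by
      intro n
      rw [hδpow n, ENNReal.ofReal_add (Real.rpow_nonneg Metric.diam_nonneg _) (by positivity)]
      congr 1
      by_cases hne : (t n).Nonempty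
      · simp only [hne, iSup_pos]
        have hfin : EMetric.diam (t n) ≠ ⊤ := ne_top_of_le_ne_top ENNReal.ofReal_ne_top (htd n)
        rw [Metric.diam, ENNReal.toReal_rpow]
        exact ENNReal.ofReal_toReal (ENNReal.rpow_ne_top_of_nonneg hs.le hfin)
      · have : t n = ∅ := Set.not_nonempty_iff_eq_empty.1 hne
        simp [hne, this, Real.zero_rpow hs.ne']
    calc ∑' n, ENNReal.ofReal (δ n ^ s)
        = (∑' n, ⨆ _ : (t n).Nonempty, EMetric.diam (t n) ^ s)
          + ∑' n, ENNReal.ofReal (η / 2 / 2 ^ n) := by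
          rw [← ENNReal.tsum_add]; exact tsum_congr hterm
      _ ≤ ENNReal.ofReal η + ENNReal.ofReal η := by
          have hgeo : ∑' n : ℕ, ENNReal.ofReal (η / 2 / 2 ^ n) = ENNReal.ofReal η := by
            rw [← ENNReal.ofReal_tsum_of_nonneg (fun m => by positivity)
              (summable_geometric_two' η), tsum_geometric_two' η]
          exact add_le_add htsum.le hgeo.le
      _ ≤ ENNReal.ofReal (2 * ε) := by
          rw [← ENNReal.ofReal_add hη.le hη.le]
          exact ENNReal.ofReal_le_ofReal (by linarith)

/-- The core estimate: the parabolic content of the graph vanishes. -/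
lemma parContent_graph_zero (d : ℕ) {H α β : ℝ} (θ : ℝ) (hH0 : 0 < H)
    (hα : 0 < α) (hθ : 0 < θ) (hθ1 : θ ≤ 1) (hθα : α ≤ θ * H)
    {A : Set ℝ} (hA : A ⊆ Set.Icc 0 1) (f : ℝ → Fin d → ℝ)
    {K : ℝ} (hK : 0 ≤ K)
    (hf : ∀ x ∈ Set.Icc (0:ℝ) 1, ∀ y ∈ Set.Icc (0:ℝ) 1, ‖f x - f y‖ ≤ K * |x - y| ^ α)
    (hβ : 0 < β)
    (he : (dimH A).toReal < (α - θ * H) * d + θ * β) :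
    parContent d H β ((fun t => (t, f t)) '' A) = 0 := by
  classical
  set D : ℝ := (dimH A).toReal with hD
  set ee : ℝ := (α - θ * H) * d + θ * β with he'
  set C : ℝ := (2 * K + 2) ^ d with hC
  have hC1 : (1:ℝ) ≤ 2 * K + 2 := by linarith
  have hC0 : (0:ℝ) < C := by positivity
  set s : ℝ := (D + ee) / 2 with hs'
  have hDnn : 0 ≤ D := ENNReal.toReal_nonneg
  have hDs : D < s := by rw [hs']; linarith
  have hse : s ≤ ee := by rw [hs']; linarith
  have hs : 0 < s := lt_of_le_of_lt hDnn hDs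
  have hfin : dimH A ≠ ⊤ := by
    have h1 : dimH A ≤ dimH (Set.univ : Set ℝ) := dimH_mono (Set.subset_univ A)
    rw [Real.dimH_univ] at h1
    exact ne_top_of_le_ne_top ENNReal.one_ne_top h1
  have hdim' : dimH A < ENNReal.ofReal s := (ENNReal.lt_ofReal_iff_toReal_lt hfin).2 hDs
  -- the key uniform bound
  have key : ∀ ε : ℝ, 0 < ε →
      parContent d H β ((fun t => (t, f t)) '' A) ≤ ENNReal.ofReal ((2 * C + 1) * ε) := by
    intro ε hε
    obtain ⟨c, δ, hδpos, hδ1, hcov, hsum⟩ := exists_cover_of_dimH_lt hs hdim' hε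
    set x : ℕ → ℝ :=
      fun n => if h : (A ∩ Set.Icc (c n) (c n + δ n)).Nonempty then h.choose else 0 with hxdef
    set lam : ℕ → ℝ := fun n => δ n ^ θ with hlamdef
    set M : ℕ → ℕ := fun n => ⌈2 * K * δ n ^ (α - θ * H)⌉₊ + 1 with hMdef
    have hlam_pos : ∀ n, 0 < lam n := fun n => Real.rpow_pos_of_pos (hδpos n) _
    have hlam_ge : ∀ n, δ n ≤ lam n := by
      intro n
      have := Real.rpow_le_rpow_of_exponent_ge (hδpos n) (hδ1 n) hθ1
      rwa [Real.rpow_one] at this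
    have hlamH : ∀ n, lam n ^ H = δ n ^ (θ * H) := by
      intro n
      rw [hlamdef, ← Real.rpow_mul (hδpos n).le]
    have hone_le : ∀ n, (1:ℝ) ≤ δ n ^ (α - θ * H) := by
      intro n
      have h0 : α - θ * H ≤ 0 := by linarith
      have := Real.rpow_le_rpow_of_exponent_ge (hδpos n) (hδ1 n) h0
      rwa [Real.rpow_zero] at this
    set g : (Σ n : ℕ, (Fin d → Fin (M n))) → ℝ × (Fin d → ℝ) × ℝ :=
      fun p => (c p.1,
        fun j => f (x p.1) j - K * δ p.1 ^ α + (p.2 j : ℝ) * (lam p.1 ^ H), lam p.1) with hgdef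
    have hgpos : ∀ i, 0 < (g i).2.2 := fun i => hlam_pos i.1
    have hgcov : ((fun t => (t, f t)) '' A) ⊆
        ⋃ i, parRect d H (g i).1 (g i).2.1 (g i).2.2 := by
      rintro p ⟨t, htA, rfl⟩
      obtain ⟨_, ⟨n, rfl⟩, htn⟩ := hcov htA
      have htn' : t ∈ Set.Icc (c n) (c n + δ n) := htn
      have hne : (A ∩ Set.Icc (c n) (c n + δ n)).Nonempty := ⟨t, htA, htn'⟩
      have hx : x n ∈ A ∩ Set.Icc (c n) (c n + δ n) := by
        rw [hxdef]; simp only [dif_pos hne]; exact hne.choose_spec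
      have t01 : t ∈ Set.Icc (0:ℝ) 1 := hA htA
      have x01 : x n ∈ Set.Icc (0:ℝ) 1 := hA hx.1
      have hdist : |t - x n| ≤ δ n := by
        obtain ⟨h1, h2⟩ := htn'
        obtain ⟨h3, h4⟩ := hx.2
        rw [abs_le]; constructor <;> linarith
      have hnorm : ‖f t - f (x n)‖ ≤ K * δ n ^ α := by
        refine (hf t t01 (x n) x01).trans ?_
        have : |t - x n| ^ α ≤ δ n ^ α :=
          Real.rpow_le_rpow (abs_nonneg _) hdist hα.le
        exact mul_le_mul_of_nonneg_left this hK
      have hcoord : ∀ j, |f t j - f (x n) j| ≤ K * δ n ^ α := by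
        intro j
        have h1 : ‖(f t - f (x n)) j‖ ≤ ‖f t - f (x n)‖ := norm_le_pi_norm _ j
        rw [Pi.sub_apply, Real.norm_eq_abs] at h1
        exact h1.trans hnorm
      set L : ℝ := lam n ^ H with hLdef
      have hL : 0 < L := Real.rpow_pos_of_pos (hlam_pos n) _
      have hq0 : ∀ j, 0 ≤ f t j - (f (x n) j - K * δ n ^ α) := by
        intro j; have := (abs_le.1 (hcoord j)).1; linarith
      have hq2 : ∀ j, f t j - (f (x n) j - K * δ n ^ α) ≤ 2 * K * δ n ^ α := by
        intro j; have := (abs_le.1 (hcoord j)).2; linarith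
      have hLδ : L = δ n ^ (θ * H) := hlamH n
      have hqL : ∀ j, (f t j - (f (x n) j - K * δ n ^ α)) / L ≤ 2 * K * δ n ^ (α - θ * H) := by
        intro j
        rw [div_le_iff₀ hL, hLδ]
        have hsplit : δ n ^ (α - θ * H) * δ n ^ (θ * H) = δ n ^ α := by
          rw [← Real.rpow_add (hδpos n)]; norm_num
        calc f t j - (f (x n) j - K * δ n ^ α) ≤ 2 * K * δ n ^ α := hq2 j
          _ = 2 * K * δ n ^ (α - θ * H) * δ n ^ (θ * H) := by rw [← hsplit]; ring
      have hk_lt : ∀ j, ⌊(f t j - (f (x n) j - K * δ n ^ α)) / L⌋₊ < M n := by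
        intro j
        have h1 : (⌊(f t j - (f (x n) j - K * δ n ^ α)) / L⌋₊ : ℝ)
            ≤ 2 * K * δ n ^ (α - θ * H) :=
          le_trans (Nat.floor_le (div_nonneg (hq0 j) hL.le)) (hqL j)
        have h2 : (⌊(f t j - (f (x n) j - K * δ n ^ α)) / L⌋₊ : ℝ)
            ≤ (⌈2 * K * δ n ^ (α - θ * H)⌉₊ : ℝ) := h1.trans (Nat.le_ceil _)
        have h3 := Nat.cast_le (α := ℝ).1 h2
        have hMn : M n = ⌈2 * K * δ n ^ (α - θ * H)⌉₊ + 1 := rfl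
        omega
      refine Set.mem_iUnion.2 ⟨⟨n, fun j => ⟨_, hk_lt j⟩⟩, ?_⟩
      rw [hgdef]
      refine ⟨⟨htn'.1, ?_⟩, ?_⟩
      · have := hlam_ge n; have := htn'.2; linarith
      · intro j _
        simp only []
        set q : ℝ := f t j - (f (x n) j - K * δ n ^ α) with hqdef
        have hfl1 : (⌊q / L⌋₊ : ℝ) * L ≤ q := by
          rw [← le_div_iff₀ hL]; exact Nat.floor_le (div_nonneg (hq0 j) hL.le)
        have hfl2 : q < ((⌊q / L⌋₊ : ℝ) + 1) * L := by
          rw [← div_lt_iff₀ hL]; exact Nat.lt_floor_add_one _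
        rw [Set.mem_Icc]
        constructor
        · linarith
        · linarith
    -- sum bound
    have h3 : ∀ n, (M n : ℝ≥0∞) ^ d * ENNReal.ofReal (lam n ^ β)
        ≤ ENNReal.ofReal C * ENNReal.ofReal (δ n ^ s) := by
      intro n
      have hlamβ : lam n ^ β = δ n ^ (θ * β) := by
        rw [hlamdef, ← Real.rpow_mul (hδpos n).le]
      have hceil : (⌈2 * K * δ n ^ (α - θ * H)⌉₊ : ℝ) < 2 * K * δ n ^ (α - θ * H) + 1 :=
        Nat.ceil_lt_add_one (mul_nonneg (by linarith) (Real.rpow_nonneg (hδpos n).le _))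
      have hMr : (M n : ℝ) = (⌈2 * K * δ n ^ (α - θ * H)⌉₊ : ℝ) + 1 := by
        have : M n = ⌈2 * K * δ n ^ (α - θ * H)⌉₊ + 1 := rfl
        rw [this]; push_cast; ring
      have hM : (M n : ℝ) ≤ (2 * K + 2) * δ n ^ (α - θ * H) := by
        have h5 := hone_le n
        rw [hMr]; nlinarith
      have hMcast : (M n : ℝ≥0∞) = ENNReal.ofReal (M n : ℝ) := by
        rw [ENNReal.ofReal_natCast]
      have hreal : ((2 * K + 2) * δ n ^ (α - θ * H)) ^ d * δ n ^ (θ * β)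
          ≤ C * δ n ^ s := by
        have hpow : (δ n ^ (α - θ * H)) ^ d = δ n ^ ((α - θ * H) * d) := by
          rw [← Real.rpow_natCast (δ n ^ (α - θ * H)) d, ← Real.rpow_mul (hδpos n).le]
        have hadd : δ n ^ ((α - θ * H) * d) * δ n ^ (θ * β) = δ n ^ ee := by
          rw [← Real.rpow_add (hδpos n), he']
        have hes : δ n ^ ee ≤ δ n ^ s :=
          Real.rpow_le_rpow_of_exponent_ge (hδpos n) (hδ1 n) hse
        calc ((2 * K + 2) * δ n ^ (α - θ * H)) ^ d * δ n ^ (θ * β)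
            = C * ((δ n ^ (α - θ * H)) ^ d * δ n ^ (θ * β)) := by rw [hC, mul_pow]; ring
          _ = C * δ n ^ ee := by rw [hpow, hadd]
          _ ≤ C * δ n ^ s := by exact mul_le_mul_of_nonneg_left hes hC0.le
      calc (M n : ℝ≥0∞) ^ d * ENNReal.ofReal (lam n ^ β)
          ≤ (ENNReal.ofReal ((2 * K + 2) * δ n ^ (α - θ * H))) ^ d
            * ENNReal.ofReal (δ n ^ (θ * β)) := by
            rw [hMcast, hlamβ]
            gcongr
        _ = ENNReal.ofReal (((2 * K + 2) * δ n ^ (α - θ * H)) ^ d * δ n ^ (θ * β)) := by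
            have hnn : (0:ℝ) ≤ (2 * K + 2) * δ n ^ (α - θ * H) :=
              mul_nonneg (by linarith) (Real.rpow_nonneg (hδpos n).le _)
            rw [← ENNReal.ofReal_pow hnn, ← ENNReal.ofReal_mul (pow_nonneg hnn d)]
        _ ≤ ENNReal.ofReal (C * δ n ^ s) := ENNReal.ofReal_le_ofReal hreal
        _ = ENNReal.ofReal C * ENNReal.ofReal (δ n ^ s) := ENNReal.ofReal_mul hC0.le
    have hsum_g : ∑' i, ENNReal.ofReal ((g i).2.2 ^ β) ≤ ENNReal.ofReal (2 * C * ε) := by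
      have h1 : ∑' i, ENNReal.ofReal ((g i).2.2 ^ β)
          = ∑' n, ∑' _ : Fin d → Fin (M n), ENNReal.ofReal (lam n ^ β) :=
        ENNReal.tsum_sigma' _
      have h2 : ∀ n : ℕ, (∑' _ : Fin d → Fin (M n), ENNReal.ofReal (lam n ^ β))
          = (M n : ℝ≥0∞) ^ d * ENNReal.ofReal (lam n ^ β) := by
        intro n
        rw [tsum_fintype, Finset.sum_const, Finset.card_univ]
        have hcard : Fintype.card (Fin d → Fin (M n)) = (M n) ^ d := by
          simp [Fintype.card_fun]
        rw [hcard, nsmul_eq_mul, Nat.cast_pow]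
      calc ∑' i, ENNReal.ofReal ((g i).2.2 ^ β)
          = ∑' n, (M n : ℝ≥0∞) ^ d * ENNReal.ofReal (lam n ^ β) := by
            rw [h1]; exact tsum_congr h2
        _ ≤ ∑' n, ENNReal.ofReal C * ENNReal.ofReal (δ n ^ s) :=
            ENNReal.tsum_le_tsum h3
        _ = ENNReal.ofReal C * ∑' n, ENNReal.ofReal (δ n ^ s) := ENNReal.tsum_mul_left
        _ ≤ ENNReal.ofReal C * ENNReal.ofReal (2 * ε) := mul_le_mul_right hsum _
        _ = ENNReal.ofReal (2 * C * ε) := by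
            rw [← ENNReal.ofReal_mul hC0.le]
            congr 1; ring
    have hmain := parContent_le_aux hβ g hgpos hgcov hε
    refine hmain.trans ?_
    calc (∑' i, ENNReal.ofReal ((g i).2.2 ^ β)) + ENNReal.ofReal ε
        ≤ ENNReal.ofReal (2 * C * ε) + ENNReal.ofReal ε := add_le_add hsum_g le_rfl
      _ = ENNReal.ofReal ((2 * C + 1) * ε) := by
          rw [← ENNReal.ofReal_add (by positivity) hε.le]
          congr 1; ring
  -- conclude
  refine le_antisymm ?_ (zero_le)
  refine ENNReal.le_of_forall_pos_le_add fun ε' hε' _ => ?_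
  rw [zero_add]
  have hc : (0:ℝ) < 2 * C + 1 := by linarith
  have hε'r : (0:ℝ) < (ε' : ℝ) := by exact_mod_cast hε'
  have hεr : (0:ℝ) < (ε' : ℝ) / (2 * C + 1) := by positivity
  refine (key _ hεr).trans ?_
  rw [mul_comm (2 * C + 1), div_mul_cancel₀ _ hc.ne']
  exact le_of_eq ENNReal.ofReal_coe_nnreal

/-- For `H ∈ (0,1)`, a Borel set `A ⊆ [0,1]`, `0 < α ≤ H` and an `α`-Hölder continuous
function `f : [0,1] → ℝ^d` (i.e. `‖f(x)-f(y)‖_∞ ≤ K|x-y|^α` on `[0,1]` for some `K ≥ 0`):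
`dim_{Ψ,H}(Gr_A(f)) ≤ min((H/α)·dim(A), dim(A) + (H−α)·d)`. -/
theorem parDim_graph_le_of_holder (d : ℕ) (H α : ℝ) (hH : H ∈ Set.Ioo (0:ℝ) 1)
    (hα : 0 < α) (hαH : α ≤ H)
    (A : Set ℝ) (hAm : MeasurableSet A) (hA : A ⊆ Set.Icc 0 1)
    (f : ℝ → Fin d → ℝ)
    (hf : ∃ K : ℝ, 0 ≤ K ∧ ∀ x ∈ Set.Icc (0:ℝ) 1, ∀ y ∈ Set.Icc (0:ℝ) 1,
      ‖f x - f y‖ ≤ K * |x - y| ^ α) :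
    parDim d H ((fun t => (t, f t)) '' A) ≤
      min (H / α * (dimH A).toReal) ((dimH A).toReal + (H - α) * d) := by
  obtain ⟨K, hK, hfK⟩ := hf
  have hH0 : (0:ℝ) < H := hH.1
  set D : ℝ := (dimH A).toReal with hD
  have hDnn : 0 ≤ D := ENNReal.toReal_nonneg
  set m : ℝ := min (H / α * D) (D + (H - α) * d) with hm
  have hm1 : 0 ≤ H / α * D := mul_nonneg (div_nonneg hH0.le hα.le) hDnn
  have hm2 : 0 ≤ D + (H - α) * d :=
    add_nonneg hDnn (mul_nonneg (by linarith) (Nat.cast_nonneg d))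
  have hm0 : 0 ≤ m := le_min hm1 hm2
  set S : Set ℝ := {β : ℝ | 0 ≤ β ∧ parContent d H β ((fun t => (t, f t)) '' A) = 0}
    with hS
  have hmem : ∀ β : ℝ, m < β → β ∈ S := by
    intro β hβ
    have hβ0 : 0 < β := lt_of_le_of_lt hm0 hβ
    refine ⟨hβ0.le, ?_⟩
    rcases min_lt_iff.1 hβ with h | h
    · -- use θ = α / H
      refine parContent_graph_zero d (α / H) hH0 hα (div_pos hα hH0)
        ((div_le_one hH0).2 hαH) (le_of_eq (div_mul_cancel₀ α hH0.ne').symm)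
        hA f hK hfK hβ0 ?_
      rw [div_mul_cancel₀ α hH0.ne']
      have h3 : 0 < α / H := div_pos hα hH0
      have h4 : D < α / H * β := by
        calc D = α / H * (H / α * D) := by field_simp
          _ < α / H * β := mul_lt_mul_of_pos_left h h3
      simpa using h4
    · -- use θ = 1
      refine parContent_graph_zero d 1 hH0 hα one_pos le_rfl (by linarith)
        hA f hK hfK hβ0 ?_
      have : D < (α - 1 * H) * d + 1 * β := by
        rw [one_mul, one_mul]
        push_cast
        nlinarith [Nat.cast_nonneg (α := ℝ) d]
      exact this
  have hne : S.Nonempty := ⟨m + 1, hmem (m + 1) (by linarith)⟩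
  have hbdd : BddBelow S := ⟨0, fun β hβ => hβ.1⟩
  show sInf S ≤ m
  rw [Real.sInf_le_iff hbdd hne]
  intro ε hε
  exact ⟨m + ε / 2, hmem _ (by linarith), by linarith⟩
end
end
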